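/- Suppose real sequences (f₊ₖ)ₖ≥0 and (f₋ₖ)ₖ≥0 satisfy, for all k ≥ 1: (i) -(γ₊₋ - 1)f₊ₖ + γ₋₊ f₋ₖ = (k+1)f₊,ₖ₊₁ − k f₊ₖ and (ii) -(γ₋₊ - 1)f₋ₖ + γ₊₋ f₊ₖ = −k f₋ₖ, where γ₋₊ > 0 is not an integer and γ₊₋ > 0. Then for every k ≥ 1, f₊ₖ = f₊₀ · ∏_{i=0}^{k-1} [ (i − γ₊₋ + 1 + γ₋₊γ₊₋/(γ₋₊ − 1 − i)) / (i+1) ], together with the initial relations f₊₁ = -(γ₊₋ -1)f₊₀ + γ₋₊ f₋₀ and 0 = -(γ₋₊ - 1)f₋₀ + γ₊₋ f₊₀. In particular, the two sequences are uniquely determined by f₊₀. -/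
import Mathlib


theorem stmt_9 (γmp γpm : ℝ) (hmp : 0 < γmp) (hpm : 0 < γpm)
    (hnotint : ∀ m : ℤ, γmp ≠ m)
    (fp fm : ℕ → ℝ)
    (hinit1 : fp 1 = -(γpm - 1) * fp 0 + γmp * fm 0)
    (hinit2 : 0 = -(γmp - 1) * fm 0 + γpm * fp 0)
    (hrec : ∀ k : ℕ, 1 ≤ k →
      -(γpm - 1) * fp k + γmp * fm k = (k + 1 : ℝ) * fp (k + 1) - (k : ℝ) * fp k ∧
      -(γmp - 1) * fm k + γpm * fp k = -(k : ℝ) * fm k) :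
    ∀ k : ℕ, 1 ≤ k →
      fp k = fp 0 *
        ∏ i ∈ Finset.range k,
          ((i - γpm + 1 + γmp * γpm / (γmp - 1 - i)) / (i + 1) : ℝ) := by
  have hne : ∀ k : ℕ, γmp - 1 - k ≠ 0 := by
    intro k h
    exact hnotint (k + 1) (by push_cast; linarith)
  intro k hk
  induction k, hk using Nat.le_induction with
  | base =>
    have h0 : γmp - 1 ≠ 0 := by simpa using hne 0
    have hfm0 : fm 0 = γpm * fp 0 / (γmp - 1) := by
      field_simp
      linarith [hinit2]
    rw [hinit1, hfm0]
    simp [Finset.range_one]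
    field_simp
    ring
  | succ k hk ih =>
    obtain ⟨h1, h2⟩ := hrec k hk
    have hk1 : (k : ℝ) + 1 ≠ 0 := by positivity
    have hnk := hne k
    have hfmk : fm k = γpm * fp k / (γmp - 1 - k) := by
      field_simp
      linarith [h2]
    rw [hfmk] at h1
    have hstep : fp (k + 1) =
        fp k * (((k : ℝ) - γpm + 1 + γmp * γpm / (γmp - 1 - k)) / (k + 1)) := by
      field_simp at h1 ⊢
      linarith [h1]
    rw [Finset.prod_range_succ, hstep, ih]
    push_cast
    ring
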